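/- Consider the continuous linear operator T on the Fréchet space s of rapidly decreasing real sequences given by T(x₀, x₁, x₂, …) = (0, 1²x₁, 2²x₂, 3²x₃, …). Then the linear ODE x'(t) = T(x(t)) has no solution x : (−δ,δ) → s (for any δ > 0) with initial value x(0) = e_N (the N-th unit sequence) for any N ≥ 0: any candidate solution has coordinates x_n(t) = (n!/N!)² t^{n−N}/(n−N)! for n ≥ N, which for every t ≠ 0 fails to be rapidly decreasing. -/

import Mathlib

/-- The continuous linear operator `T(x₀,x₁,x₂,…) = (0, 1²x₀, 2²x₁, 3²x₂, …)` on the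
space of rapidly decreasing sequences (in coordinates: `(Tx)₀ = 0`,
`(Tx)_{n+1} = (n+1)² x_n`). -/
def seqOp (y : ℕ → ℝ) : ℕ → ℝ
  | 0 => 0
  | n + 1 => ((n + 1 : ℕ) : ℝ) ^ 2 * y n

/-- A sequence is rapidly decreasing if `n^k |x_n|` is bounded for each `k`. -/
def RapidlyDecreasingSeq (y : ℕ → ℝ) : Prop :=
  ∀ k : ℕ, ∃ C : ℝ, ∀ n : ℕ, (n : ℝ) ^ k * |y n| ≤ C

/-- Explicit coefficients of the candidate solution. -/
noncomputable def coefSeq (N : ℕ) : ℕ → ℝ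
  | 0 => 1
  | m + 1 => ((N + m + 1 : ℕ) : ℝ) ^ 2 / (m + 1) * coefSeq N m

lemma factorial_le_coefSeq (N m : ℕ) : (m.factorial : ℝ) ≤ coefSeq N m := by
  induction m with
  | zero => simp [coefSeq]
  | succ m ih =>
    have hfac : (0:ℝ) < (m.factorial : ℝ) := by positivity
    have h1 : ((m + 1 : ℕ) : ℝ) ^ 2 / (m + 1) * (m.factorial : ℝ)
        ≤ ((N + m + 1 : ℕ) : ℝ) ^ 2 / (m + 1) * coefSeq N m := by
      apply mul_le_mul
      · apply div_le_div_of_nonneg_right ?_ (by positivity)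
        · exact pow_le_pow_left₀ (by positivity) (by exact_mod_cast Nat.le_add_left _ _) 2
      · exact ih
      · positivity
      · positivity
    calc ((m+1).factorial : ℝ) = ((m + 1 : ℕ) : ℝ) ^ 2 / (m + 1) * (m.factorial : ℝ) := by
          push_cast [Nat.factorial_succ]
          field_simp
      _ ≤ _ := h1

/-- Uniqueness on the ball. -/
lemma eq_on_ball {δ : ℝ} (hδ : 0 < δ) (f g g' : ℝ → ℝ)
    (hf : ∀ t, |t| < δ → HasDerivAt f (g' t) t)
    (hg : ∀ t, |t| < δ → HasDerivAt g (g' t) t)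
    (h0 : f 0 = g 0) : ∀ t, |t| < δ → f t = g t := by
  intro t ht
  have h0mem : (0:ℝ) ∈ Set.Ioo (-δ) δ := by constructor <;> simpa using hδ
  have htmem : t ∈ Set.Ioo (-δ) δ := abs_lt.mp ht
  have key : ‖(f - g) t - (f - g) 0‖ ≤ 0 * ‖t - 0‖ := by
    apply (convex_Ioo (-δ) δ).norm_image_sub_le_of_norm_hasDerivWithin_le
      (f' := fun _ => (0:ℝ)) ?_ (fun x _ => by simp) h0mem htmem
    intro y hy
    have : HasDerivAt (f - g) 0 y := by
      simpa using (hf y (abs_lt.mpr ⟨hy.1, hy.2⟩)).sub (hg y (abs_lt.mpr ⟨hy.1, hy.2⟩))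
    exact this.hasDerivWithinAt
  have : (f - g) t = (f - g) 0 := by
    have hk : ‖(f - g) t - (f - g) 0‖ ≤ 0 := by simpa using key
    have := norm_le_zero_iff.mp hk
    linarith [sub_eq_zero.mp this]
  have h0' : (f - g) 0 = 0 := by simp [h0]
  have := this.trans h0'
  simpa [sub_eq_zero] using this

/-- The linear ODE `x'(t) = T(x(t))` in the Fréchet space `s` of rapidly decreasing
sequences has no local solution with initial value the `N`-th unit sequence: there is
no curve `x` defined (and solving the ODE coordinatewise) on `(−δ,δ)` with values in
`s` and `x(0) = e_N`. -/
theorem no_local_solution_in_s (N : ℕ) (δ : ℝ) (hδ : 0 < δ) :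
    ¬ ∃ x : ℝ → ℕ → ℝ,
      (∀ t : ℝ, |t| < δ → RapidlyDecreasingSeq (x t)) ∧
      (∀ n : ℕ, x 0 n = if n = N then 1 else 0) ∧
      (∀ t : ℝ, |t| < δ → ∀ n : ℕ, HasDerivAt (fun s => x s n) (seqOp (x t) n) t) := by
  rintro ⟨x, hs, h0, hd⟩
  -- Step A: coordinates below N vanish
  have stepA : ∀ n, n < N → ∀ t, |t| < δ → x t n = 0 := by
    intro n
    induction n with
    | zero =>
      intro hn t ht
      have := eq_on_ball hδ (fun s => x s 0) (fun _ => 0) (fun _ => 0)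
        (fun t ht => by simpa [seqOp] using hd t ht 0)
        (fun t ht => hasDerivAt_const t 0)
        (by show x 0 0 = 0; rw [h0 0, if_neg (by omega : ¬ 0 = N)])
      exact this t ht
    | succ k ih =>
      intro hn t ht
      have hk : k < N := Nat.lt_of_succ_lt hn
      have := eq_on_ball hδ (fun s => x s (k+1)) (fun _ => 0) (fun _ => 0)
        (fun t ht => by
          have := hd t ht (k+1)
          simpa [seqOp, ih hk t ht] using this)
        (fun t ht => hasDerivAt_const t 0)
        (by show x 0 (k+1) = 0; rw [h0 (k+1), if_neg (by omega : ¬ k + 1 = N)])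
      exact this t ht
  -- Step B: explicit formula above N
  have stepB : ∀ m, ∀ t, |t| < δ → x t (N + m) = coefSeq N m * t ^ m := by
    intro m
    induction m with
    | zero =>
      have hder0 : ∀ t, |t| < δ → seqOp (x t) N = 0 := by
        intro t ht
        cases N with
        | zero => simp [seqOp]
        | succ k => simp [seqOp, stepA k (Nat.lt_succ_self k) t ht]
      intro t ht
      have := eq_on_ball hδ (fun s => x s N) (fun _ => 1) (fun _ => 0)
        (fun t ht => by simpa [hder0 t ht] using hd t ht N)
        (fun t ht => hasDerivAt_const t 1)
        (by simp [h0 N])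
      simpa [coefSeq] using this t ht
    | succ m ih =>
      intro t ht
      have key : ∀ t, |t| < δ →
          HasDerivAt (fun s => x s (N + (m+1))) (coefSeq N (m+1) * ((m+1) * t ^ m)) t := by
        intro t ht
        have h1 := hd t ht (N + (m + 1))
        have h2 : seqOp (x t) (N + (m+1)) = ((N + m + 1 : ℕ) : ℝ) ^ 2 * x t (N + m) := by
          show seqOp (x t) ((N + m) + 1) = _
          simp [seqOp]
        rw [h2, ih t ht] at h1
        have harith : ((N + m + 1 : ℕ) : ℝ) ^ 2 * (coefSeq N m * t ^ m)
            = coefSeq N (m+1) * ((m+1) * t ^ m) := by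
          show _ = ((N + m + 1 : ℕ) : ℝ) ^ 2 / (m + 1) * coefSeq N m * ((m+1) * t ^ m)
          have hm1 : ((m:ℝ) + 1) ≠ 0 := by positivity
          field_simp
        rwa [harith] at h1
      have hg : ∀ t : ℝ, |t| < δ →
          HasDerivAt (fun s : ℝ => coefSeq N (m+1) * s ^ (m+1))
            (coefSeq N (m+1) * ((m+1) * t ^ m)) t := by
        intro t _
        simpa using (hasDerivAt_pow (m+1) t).const_mul (coefSeq N (m+1))
      have := eq_on_ball hδ (fun s => x s (N + (m+1)))
        (fun s => coefSeq N (m+1) * s ^ (m+1))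
        (fun t => coefSeq N (m+1) * ((m+1) * t ^ m)) key hg
        (by show x 0 (N + (m+1)) = coefSeq N (m+1) * 0 ^ (m+1); rw [h0 (N + (m+1)), if_neg (by omega : ¬ N + (m+1) = N)]; simp)
      exact this t ht
  -- Step C: contradiction
  set t₀ : ℝ := δ / 2 with ht₀def
  have ht₀pos : 0 < t₀ := by positivity
  have ht₀lt : |t₀| < δ := by rw [abs_of_pos ht₀pos]; linarith
  obtain ⟨C, hC⟩ := hs t₀ ht₀lt 0
  have hC' : ∀ n, |x t₀ n| ≤ C := by intro n; simpa using hC n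
  -- find m with m! * t₀^m > C
  have htend : Filter.Tendsto (fun n : ℕ => ((|C|+1)/t₀) ^ n / (n.factorial : ℝ))
      Filter.atTop (nhds 0) := FloorSemiring.tendsto_pow_div_factorial_atTop _
  have hev : ∀ᶠ n : ℕ in Filter.atTop, ((|C|+1)/t₀) ^ n / (n.factorial : ℝ) < 1 := by
    have := htend.eventually (eventually_lt_nhds (by norm_num : (0:ℝ) < 1))
    exact this
  obtain ⟨m, hm1, hm2⟩ := (hev.and (Filter.eventually_ge_atTop 1)).exists
  have hfacpos : (0:ℝ) < (m.factorial : ℝ) := by positivity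
  have h3 : ((|C|+1)/t₀) ^ m < (m.factorial : ℝ) := by
    rw [div_lt_one hfacpos] at hm1; exact hm1
  have h4 : (|C|+1) ^ m < (m.factorial : ℝ) * t₀ ^ m := by
    have := mul_lt_mul_of_pos_right h3 (pow_pos ht₀pos m)
    rwa [div_pow, div_mul_cancel₀] at this
    positivity
  have h5 : C < (m.factorial : ℝ) * t₀ ^ m := by
    have : |C| + 1 ≤ (|C|+1) ^ m := le_self_pow₀ (by linarith [abs_nonneg C]) (by omega)
    have hCle : C ≤ |C| := le_abs_self C
    linarith
  have h6 : (m.factorial : ℝ) * t₀ ^ m ≤ |x t₀ (N + m)| := by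
    rw [stepB m t₀ ht₀lt]
    have hcoef := factorial_le_coefSeq N m
    have : (m.factorial : ℝ) * t₀ ^ m ≤ coefSeq N m * t₀ ^ m :=
      mul_le_mul_of_nonneg_right hcoef (by positivity)
    calc (m.factorial : ℝ) * t₀ ^ m ≤ coefSeq N m * t₀ ^ m := this
      _ ≤ |coefSeq N m * t₀ ^ m| := le_abs_self _
  linarith [hC' (N + m)]
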